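/- Let p be a prime and F = ZMod p. Fix a ∈ F, a multiplicative character χ of F (extended by χ(0) := 1), with a ≠ 0 or χ nontrivial. There is a bound o_{p→∞}(1), uniform over such (a, χ), for the equidistribution average: for every ξ = (ξ₁, ξ₂, ξ₃) ∈ ℤ³ such that NOT (ξ₁ a = 0 in F, ξ₂ a = 0 in F, and χ^{ξ₃} is trivial), one has |(1/p) ∑_{x ∈ F} e_p(ξ₁ a x² + 2 ξ₂ a x) · χ(x)^{ξ₃}| ≤ C p^{−c} for absolute constants C, c > 0; while if ξ₁ a = 0, ξ₂ a = 0 and χ^{ξ₃} = 1 then the average equals 1. -/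

import Mathlib

open Finset Complex

/-- The additive character `e_p(t) = exp(2πi t / p)`. -/
noncomputable def ep (p : ℕ) (t : ZMod p) : ℂ :=
  Complex.exp (2 * Real.pi * Complex.I * (t.val : ℂ) / (p : ℂ))

namespace Stmt19Aux

lemma conj_of_norm_one {z : ℂ} (h : ‖z‖ = 1) : (starRingEnd ℂ) z = z⁻¹ := by
  have h1 : z * (starRingEnd ℂ) z = 1 := by
    rw [Complex.mul_conj]
    norm_cast
    rw [Complex.normSq_eq_norm_sq, h, one_pow]
  exact eq_inv_of_mul_eq_one_left (by rw [mul_comm] at h1; exact h1)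

variable {p : ℕ} [Fact p.Prime]

lemma ep_eq (t : ZMod p) : ep p t = ZMod.stdAddChar t := by
  have h : t = ((t.val : ℤ) : ZMod p) := by
    push_cast
    rw [ZMod.natCast_val, ZMod.cast_id]
  conv_rhs => rw [h, ZMod.stdAddChar_coe]
  simp only [ep]
  push_cast
  ring_nf

lemma std_norm (t : ZMod p) : ‖ZMod.stdAddChar t‖ = 1 := by
  rw [ZMod.stdAddChar_apply]
  exact Circle.norm_coe _

lemma std_conj (t : ZMod p) :
    (starRingEnd ℂ) (ZMod.stdAddChar t) = ZMod.stdAddChar (-t) := by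
  rw [conj_of_norm_one (std_norm t), AddChar.map_neg_eq_inv]

lemma std_sum (b : ZMod p) :
    ∑ x : ZMod p, ZMod.stdAddChar (b * x) = if b = 0 then (p : ℂ) else 0 := by
  split_ifs with h
  · simp [h, ZMod.card]
  · have := AddChar.sum_eq_zero_of_ne_one (ZMod.isPrimitive_stdAddChar p h)
    simpa using this

lemma two_ne_zero' (hp : p ≠ 2) : (2 : ZMod p) ≠ 0 := by
  intro h
  have h2 : ((2 : ℕ) : ZMod p) = 0 := by norm_cast
  rw [ZMod.natCast_eq_zero_iff] at h2
  exact hp ((Nat.prime_dvd_prime_iff_eq (Fact.out) Nat.prime_two).mp h2)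

lemma quad_sum (hp : p ≠ 2) {A : ZMod p} (hA : A ≠ 0) (B : ZMod p) :
    ‖∑ y : ZMod p, ZMod.stdAddChar (A * y ^ 2 + B * y)‖ = Real.sqrt p := by
  set F := ∑ y : ZMod p, ZMod.stdAddChar (A * y ^ 2 + B * y) with hF
  have key : F * (starRingEnd ℂ) F = (p : ℂ) := by
    rw [map_sum, Finset.sum_mul_sum]
    have step1 : ∀ z y : ZMod p,
        ZMod.stdAddChar (A * y ^ 2 + B * y) *
          (starRingEnd ℂ) (ZMod.stdAddChar (A * z ^ 2 + B * z)) =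
        ZMod.stdAddChar (A * y ^ 2 + B * y - (A * z ^ 2 + B * z)) := by
      intro z y
      rw [std_conj, ← AddChar.map_add_eq_mul]
      ring_nf
    simp only [step1]
    rw [Finset.sum_comm]
    have step2 : ∀ z : ZMod p,
        ∑ y : ZMod p, ZMod.stdAddChar (A * y ^ 2 + B * y - (A * z ^ 2 + B * z)) =
        ∑ h : ZMod p, ZMod.stdAddChar (A * h ^ 2 + B * h) * ZMod.stdAddChar (2 * A * h * z) := by
      intro z
      rw [← Fintype.sum_equiv (Equiv.addLeft z)
        (fun h => ZMod.stdAddChar (A * h ^ 2 + B * h) * ZMod.stdAddChar (2 * A * h * z))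
        (fun y => ZMod.stdAddChar (A * y ^ 2 + B * y - (A * z ^ 2 + B * z)))]
      intro h
      simp only [Equiv.coe_addLeft]
      rw [← AddChar.map_add_eq_mul]
      congr 1
      ring
    simp only [step2]
    rw [Finset.sum_comm]
    have step3 : ∀ h : ZMod p,
        ∑ z : ZMod p, ZMod.stdAddChar (A * h ^ 2 + B * h) * ZMod.stdAddChar (2 * A * h * z) =
        ZMod.stdAddChar (A * h ^ 2 + B * h) * (if 2 * A * h = 0 then (p : ℂ) else 0) := by
      intro h
      rw [← Finset.mul_sum, std_sum]
    simp only [step3]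
    rw [Finset.sum_eq_single 0]
    · simp
    · intro h _ hne
      have : 2 * A * h ≠ 0 := mul_ne_zero (mul_ne_zero (two_ne_zero' hp) hA) hne
      simp [this]
    · simp
  have hnormSq : Complex.normSq F = p := by
    rw [Complex.mul_conj] at key
    exact_mod_cast key
  rw [Complex.norm_def, hnormSq]

lemma psi_sum (ψ : ZMod p → ℂ)
    (hmul : ∀ x : ZMod p, x ≠ 0 → ∀ y : ZMod p, y ≠ 0 → ψ (x * y) = ψ x * ψ y)
    {x₀ : ZMod p} (hx₀ : x₀ ≠ 0) (hx₀' : ψ x₀ ≠ 1) :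
    ∑ x ∈ Finset.univ.erase (0 : ZMod p), ψ x = 0 := by
  refine eq_zero_of_mul_eq_self_left hx₀' ?_
  rw [Finset.mul_sum]
  refine Finset.sum_equiv (Equiv.mulLeft₀ x₀ hx₀) ?_ ?_
  · intro i
    simp [Finset.mem_erase, mul_ne_zero_iff, hx₀]
  · intro i hi
    exact (hmul x₀ hx₀ i (Finset.mem_erase.mp hi).1).symm

lemma T_sq (α β : ZMod p) (ψ : ZMod p → ℂ)
    (hmul : ∀ x : ZMod p, x ≠ 0 → ∀ y : ZMod p, y ≠ 0 → ψ (x * y) = ψ x * ψ y)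
    (hnorm : ∀ x : ZMod p, x ≠ 0 → ‖ψ x‖ = 1) :
    ‖∑ x ∈ Finset.univ.erase (0 : ZMod p), ZMod.stdAddChar (α * x ^ 2 + β * x) * ψ x‖ ^ 2 =
    ‖∑ t ∈ Finset.univ.erase (0 : ZMod p), ψ t *
        ∑ y ∈ Finset.univ.erase (0 : ZMod p),
          ZMod.stdAddChar (α * (t ^ 2 - 1) * y ^ 2 + β * (t - 1) * y)‖ := by
  classical
  set T := ∑ x ∈ Finset.univ.erase (0 : ZMod p), ZMod.stdAddChar (α * x ^ 2 + β * x) * ψ x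
    with hT
  have hψ0 : ∀ y : ZMod p, y ≠ 0 → ψ y ≠ 0 := by
    intro y hy h
    simpa [h] using hnorm y hy
  have hconjT : (starRingEnd ℂ) T = ∑ y ∈ Finset.univ.erase (0 : ZMod p),
      ZMod.stdAddChar (-(α * y ^ 2 + β * y)) * (ψ y)⁻¹ := by
    rw [hT, map_sum]
    refine Finset.sum_congr rfl fun y hy => ?_
    have hy0 : y ≠ 0 := (Finset.mem_erase.mp hy).1
    rw [map_mul, std_conj]
    congr 1
    have h1 : ψ y * (starRingEnd ℂ) (ψ y) = ((Complex.normSq (ψ y) : ℝ) : ℂ) :=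
      Complex.mul_conj _
    have h2 : Complex.normSq (ψ y) = 1 := by
      rw [Complex.normSq_eq_norm_sq, hnorm y hy0, one_pow]
    rw [h2] at h1
    push_cast at h1
    exact eq_inv_of_mul_eq_one_left (by rw [mul_comm] at h1; exact h1)
  have key : T * (starRingEnd ℂ) T = ∑ t ∈ Finset.univ.erase (0 : ZMod p), ψ t *
      ∑ y ∈ Finset.univ.erase (0 : ZMod p),
        ZMod.stdAddChar (α * (t ^ 2 - 1) * y ^ 2 + β * (t - 1) * y) := by
    rw [hconjT, hT, Finset.sum_mul_sum, Finset.sum_comm]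
    have inner : ∀ y ∈ Finset.univ.erase (0 : ZMod p),
        (∑ x ∈ Finset.univ.erase (0 : ZMod p),
          ZMod.stdAddChar (α * x ^ 2 + β * x) * ψ x *
            (ZMod.stdAddChar (-(α * y ^ 2 + β * y)) * (ψ y)⁻¹)) =
        ∑ t ∈ Finset.univ.erase (0 : ZMod p),
          ψ t * ZMod.stdAddChar (α * (t ^ 2 - 1) * y ^ 2 + β * (t - 1) * y) := by
      intro y hy
      have hy0 : y ≠ 0 := (Finset.mem_erase.mp hy).1
      refine (Finset.sum_equiv (Equiv.mulRight₀ y hy0) ?_ ?_).symm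
      · intro i
        simp [Finset.mem_erase, mul_ne_zero_iff, hy0]
      · intro t ht
        have ht0 : t ≠ 0 := (Finset.mem_erase.mp ht).1
        simp only [Equiv.mulRight₀_apply]
        have e_comb : ZMod.stdAddChar (α * (t * y) ^ 2 + β * (t * y)) *
            ZMod.stdAddChar (-(α * y ^ 2 + β * y)) =
            ZMod.stdAddChar (α * (t ^ 2 - 1) * y ^ 2 + β * (t - 1) * y) := by
          rw [← AddChar.map_add_eq_mul]
          congr 1
          ring
        rw [hmul t ht0 y hy0]
        calc ψ t * ZMod.stdAddChar (α * (t ^ 2 - 1) * y ^ 2 + β * (t - 1) * y)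
            = ZMod.stdAddChar (α * (t * y) ^ 2 + β * (t * y)) *
                ZMod.stdAddChar (-(α * y ^ 2 + β * y)) * ψ t * (ψ y * (ψ y)⁻¹) := by
              rw [e_comb, mul_inv_cancel₀ (hψ0 y hy0), mul_one]; ring
          _ = ZMod.stdAddChar (α * (t * y) ^ 2 + β * (t * y)) * (ψ t * ψ y) *
                (ZMod.stdAddChar (-(α * y ^ 2 + β * y)) * (ψ y)⁻¹) := by ring
    calc ∑ y ∈ Finset.univ.erase (0 : ZMod p), ∑ x ∈ Finset.univ.erase (0 : ZMod p),
          ZMod.stdAddChar (α * x ^ 2 + β * x) * ψ x *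
            (ZMod.stdAddChar (-(α * y ^ 2 + β * y)) * (ψ y)⁻¹)
        = ∑ y ∈ Finset.univ.erase (0 : ZMod p), ∑ t ∈ Finset.univ.erase (0 : ZMod p),
            ψ t * ZMod.stdAddChar (α * (t ^ 2 - 1) * y ^ 2 + β * (t - 1) * y) :=
          Finset.sum_congr rfl inner
      _ = _ := by
          rw [Finset.sum_comm]
          simp only [← Finset.mul_sum]
  have h1 : T * (starRingEnd ℂ) T = ((Complex.normSq T : ℝ) : ℂ) := Complex.mul_conj _
  rw [h1] at key
  rw [← Complex.sq_norm] at key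
  rw [← key]
  rw [Complex.norm_real, Real.norm_eq_abs]
  exact (_root_.abs_of_nonneg (sq_nonneg _)).symm

end Stmt19Aux
open Stmt19Aux

theorem stmt19 : ∃ C : ℝ, 0 < C ∧ ∃ c : ℝ, 0 < c ∧
    ∀ (p : ℕ) [Fact p.Prime] (a : ZMod p) (χ : MulChar (ZMod p) ℂ),
      (a ≠ 0 ∨ χ ≠ 1) →
      ∀ ξ₁ ξ₂ ξ₃ : ℤ,
        (¬((ξ₁ : ZMod p) * a = 0 ∧ (ξ₂ : ZMod p) * a = 0 ∧
            (∀ x : ZMod p, x ≠ 0 → (χ x) ^ ξ₃ = 1)) →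
          ‖(1 / (p : ℂ)) * ∑ x : ZMod p,
              ep p ((ξ₁ : ZMod p) * a * x ^ 2 + 2 * (ξ₂ : ZMod p) * a * x) *
                (if x = 0 then 1 else χ x) ^ ξ₃‖ ≤ C * (p : ℝ) ^ (-c)) ∧
        (((ξ₁ : ZMod p) * a = 0 ∧ (ξ₂ : ZMod p) * a = 0 ∧
            (∀ x : ZMod p, x ≠ 0 → (χ x) ^ ξ₃ = 1)) →
          (1 / (p : ℂ)) * ∑ x : ZMod p,
              ep p ((ξ₁ : ZMod p) * a * x ^ 2 + 2 * (ξ₂ : ZMod p) * a * x) *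
                (if x = 0 then 1 else χ x) ^ ξ₃ = 1) := by
  classical
  refine ⟨3, by norm_num, 1/4, by norm_num, ?_⟩
  intro p _ a χ _ ξ₁ ξ₂ ξ₃
  have hp : p.Prime := Fact.out
  have hp1 : 1 < p := hp.one_lt
  have hp0 : (0 : ℝ) < p := by exact_mod_cast hp.pos
  have hpC : (p : ℂ) ≠ 0 := by exact_mod_cast hp.pos.ne'
  set α : ZMod p := (ξ₁ : ZMod p) * a with hαdef
  set γ : ZMod p := 2 * (ξ₂ : ZMod p) * a with hγdef
  set ψ : ZMod p → ℂ := fun x => (χ x) ^ ξ₃ with hψdef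
  have hχnorm : ∀ x : ZMod p, x ≠ 0 → ‖χ x‖ = 1 := by
    intro x hx
    have hpow : (χ x) ^ (p - 1) = 1 := by
      rw [← map_pow, ZMod.pow_card_sub_one_eq_one hx, map_one]
    exact Complex.norm_eq_one_of_pow_eq_one hpow (Nat.sub_ne_zero_of_lt hp1)
  have hψnorm : ∀ x : ZMod p, x ≠ 0 → ‖ψ x‖ = 1 := by
    intro x hx
    rw [hψdef]
    simp only [norm_zpow, hχnorm x hx, one_zpow]
  have hψmul : ∀ x : ZMod p, x ≠ 0 → ∀ y : ZMod p, y ≠ 0 → ψ (x * y) = ψ x * ψ y := by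
    intro x _ y _
    simp only [hψdef, map_mul, mul_zpow]
  have hψone : ψ 1 = 1 := by simp [hψdef]
  -- rewrite the sum
  have hterm : ∀ x : ZMod p,
      ep p (α * x ^ 2 + γ * x) * (if x = 0 then 1 else χ x) ^ ξ₃ =
      if x = 0 then 1 else ZMod.stdAddChar (α * x ^ 2 + γ * x) * ψ x := by
    intro x
    rw [ep_eq]
    by_cases hx : x = 0
    · simp [hx, AddChar.map_zero_eq_one]
    · simp [hx, hψdef]
  have hsplit : ∑ x : ZMod p, ep p (α * x ^ 2 + γ * x) * (if x = 0 then 1 else χ x) ^ ξ₃ =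
      1 + ∑ x ∈ Finset.univ.erase (0 : ZMod p),
        ZMod.stdAddChar (α * x ^ 2 + γ * x) * ψ x := by
    simp only [hterm]
    rw [← Finset.add_sum_erase _ _ (Finset.mem_univ (0 : ZMod p))]
    congr 1
    · simp
    · refine Finset.sum_congr rfl fun x hx => ?_
      rw [if_neg (Finset.mem_erase.mp hx).1]
  set T := ∑ x ∈ Finset.univ.erase (0 : ZMod p),
      ZMod.stdAddChar (α * x ^ 2 + γ * x) * ψ x with hTdef
  constructor
  · -- bound part
    intro hne
    have hnormS : ‖(1 / (p : ℂ)) * ∑ x : ZMod p,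
        ep p (α * x ^ 2 + γ * x) * (if x = 0 then 1 else χ x) ^ ξ₃‖ =
        ‖1 + T‖ / p := by
      rw [hsplit, norm_mul, norm_div, norm_one]
      simp [Complex.norm_natCast]
      ring
    rw [hnormS]
    rcases eq_or_ne p 2 with hp2 | hp2
    · -- p = 2 : trivial bound
      have hb : ∀ x : ZMod p, ‖ep p (α * x ^ 2 + γ * x) * (if x = 0 then 1 else χ x) ^ ξ₃‖ ≤ 1 := by
        intro x
        rw [norm_mul, ep_eq, std_norm, one_mul]
        by_cases hx : x = 0
        · simp [hx]
        · rw [if_neg hx, norm_zpow, hχnorm x hx, one_zpow]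
      have hnorm1 : ‖1 + T‖ ≤ (p : ℝ) := by
        rw [← hsplit]
        refine (norm_sum_le _ _).trans ?_
        refine (Finset.sum_le_sum (fun x _ => hb x)).trans ?_
        rw [Finset.sum_const, Finset.card_univ, ZMod.card, nsmul_eq_mul, mul_one]
      have hle1 : ‖1 + T‖ / (p : ℝ) ≤ 1 := by
        rw [div_le_one hp0]; exact hnorm1
      refine hle1.trans ?_
      subst hp2
      have hcast : ((2 : ℕ) : ℝ) = (2 : ℝ) := by norm_num
      rw [hcast]
      have ha : (2 : ℝ) ^ ((1 : ℝ)/4) ≤ 2 := by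
        calc (2 : ℝ) ^ ((1 : ℝ)/4) ≤ (2 : ℝ) ^ (1 : ℝ) :=
              Real.rpow_le_rpow_of_exponent_le one_le_two (by norm_num)
          _ = 2 := Real.rpow_one 2
      have hpos : (0 : ℝ) < (2 : ℝ) ^ ((1 : ℝ)/4) := Real.rpow_pos_of_pos two_pos _
      have hinv : (2 : ℝ)⁻¹ ≤ ((2 : ℝ) ^ ((1 : ℝ)/4))⁻¹ := inv_anti₀ hpos ha
      have hexp : (2 : ℝ) ^ (-(1/4) : ℝ) = ((2 : ℝ) ^ ((1 : ℝ)/4))⁻¹ := by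
        rw [show (-(1/4) : ℝ) = -((1 : ℝ)/4) by norm_num,
          Real.rpow_neg (by norm_num : (0:ℝ) ≤ 2)]
      rw [hexp]
      linarith [hinv]
    · -- main case, p odd
      have h2Z : (2 : ZMod p) ≠ 0 := two_ne_zero' hp2
      set I : ZMod p → ℂ := fun t => ∑ y ∈ Finset.univ.erase (0 : ZMod p),
          ZMod.stdAddChar (α * (t ^ 2 - 1) * y ^ 2 + γ * (t - 1) * y) with hIdef
      have hIfull : ∀ t : ZMod p, I t =
          (∑ y : ZMod p, ZMod.stdAddChar (α * (t ^ 2 - 1) * y ^ 2 + γ * (t - 1) * y)) - 1 := by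
        intro t
        rw [eq_sub_iff_add_eq]
        have h0 : ZMod.stdAddChar (α * (t ^ 2 - 1) * (0:ZMod p) ^ 2 + γ * (t - 1) * 0) = 1 := by
          norm_num
        rw [hIdef]
        conv_lhs => rw [show (1:ℂ) = ZMod.stdAddChar (α * (t ^ 2 - 1) * (0:ZMod p) ^ 2 + γ * (t - 1) * 0) from h0.symm]
        exact Finset.sum_erase_add _ _ (Finset.mem_univ (0 : ZMod p))
      have hIA0 : ∀ t : ZMod p, α * (t ^ 2 - 1) = 0 →
          I t = (if γ * (t - 1) = 0 then (p : ℂ) else 0) - 1 := by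
        intro t h
        rw [hIfull t]
        congr 1
        have harg : ∀ y : ZMod p, α * (t ^ 2 - 1) * y ^ 2 + γ * (t - 1) * y =
            (γ * (t - 1)) * y := by
          intro y; rw [h]; ring
        simp only [harg]
        exact std_sum _
      have hIAn : ∀ t : ZMod p, α * (t ^ 2 - 1) ≠ 0 → ‖I t‖ ≤ Real.sqrt p + 1 := by
        intro t h
        rw [hIfull t]
        refine (norm_sub_le _ _).trans ?_
        rw [quad_sum hp2 h, norm_one]
      have hcard : (Finset.univ.erase (0 : ZMod p)).card = p - 1 := by
        rw [Finset.card_erase_of_mem (Finset.mem_univ _), Finset.card_univ, ZMod.card]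
      set R := ∑ t ∈ Finset.univ.erase (0 : ZMod p), ψ t * I t with hRdef
      have hT2 : ‖T‖ ^ 2 = ‖R‖ := T_sq α γ ψ hψmul hψnorm
      have hsqrt1 : 1 ≤ Real.sqrt p := by
        rw [show (1:ℝ) = Real.sqrt 1 from (Real.sqrt_one).symm]
        exact Real.sqrt_le_sqrt (by exact_mod_cast hp1.le)
      have hRbound : ‖R‖ ≤ 4 * p * Real.sqrt p := by
        by_cases hα0 : α = 0
        · by_cases htriv : ∀ x : ZMod p, x ≠ 0 → ψ x = 1
          · -- then γ ≠ 0
            have hβ₀ : (ξ₂ : ZMod p) * a ≠ 0 := by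
              intro h
              exact hne ⟨hα0, h, htriv⟩
            have hγ0 : γ ≠ 0 := by
              rw [hγdef, mul_assoc]
              exact mul_ne_zero h2Z hβ₀
            have hcond : ∀ t : ZMod p, (γ * (t - 1) = 0) ↔ t = 1 := by
              intro t
              rw [mul_eq_zero, sub_eq_zero]
              simp [hγ0]
            have hRval : R = ∑ t ∈ Finset.univ.erase (0 : ZMod p),
                ((if t = 1 then (p : ℂ) else 0) - 1) := by
              rw [hRdef]
              refine Finset.sum_congr rfl fun t ht => ?_
              rw [htriv t (Finset.mem_erase.mp ht).1, one_mul,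
                hIA0 t (by rw [hα0]; ring)]
              congr 1
              simp only [hcond t]
            have h1mem : (1 : ZMod p) ∈ Finset.univ.erase (0 : ZMod p) := by
              simp [Finset.mem_erase]
            have hRval2 : R = 1 := by
              rw [hRval, Finset.sum_sub_distrib, Finset.sum_ite_eq' _ _ (fun _ => (p:ℂ)),
                if_pos h1mem, Finset.sum_const, hcard, nsmul_eq_mul,
                Nat.cast_sub hp1.le]
              push_cast
              ring
            rw [hRval2, norm_one]
            have hp1R : (1:ℝ) ≤ p := by exact_mod_cast hp1.le
            nlinarith [hp1R, hsqrt1]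
          · push_neg at htriv
            obtain ⟨x₀, hx₀, hx₀'⟩ := htriv
            have hSig : ∑ x ∈ Finset.univ.erase (0 : ZMod p), ψ x = 0 :=
              psi_sum ψ hψmul hx₀ hx₀'
            by_cases hγ0 : γ = 0
            · have hRval : R = ((p : ℂ) - 1) * ∑ x ∈ Finset.univ.erase (0 : ZMod p), ψ x := by
                rw [hRdef, Finset.mul_sum]
                refine Finset.sum_congr rfl fun t ht => ?_
                rw [hIA0 t (by rw [hα0]; ring)]
                have hc : γ * (t - 1) = 0 := by rw [hγ0]; ring
                rw [if_pos hc]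
                ring
              rw [hRval, hSig, mul_zero, norm_zero]
              positivity
            · have hcond : ∀ t : ZMod p, (γ * (t - 1) = 0) ↔ t = 1 := by
                intro t
                rw [mul_eq_zero, sub_eq_zero]
                simp [hγ0]
              have hRval : R = ∑ t ∈ Finset.univ.erase (0 : ZMod p),
                  (if t = 1 then ψ t * (p : ℂ) else 0) -
                  ∑ t ∈ Finset.univ.erase (0 : ZMod p), ψ t := by
                rw [hRdef, ← Finset.sum_sub_distrib]
                refine Finset.sum_congr rfl fun t ht => ?_
                rw [hIA0 t (by rw [hα0]; ring)]
                simp only [hcond t]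
                split_ifs with h
                · rw [h]; ring
                · ring
              have h1mem : (1 : ZMod p) ∈ Finset.univ.erase (0 : ZMod p) := by
                simp [Finset.mem_erase]
              have hRval2 : R = p := by
                rw [hRval, hSig, sub_zero, Finset.sum_ite_eq' _ _ (fun t => ψ t * (p:ℂ)),
                  if_pos h1mem, hψone, one_mul]
              rw [hRval2, Complex.norm_natCast]
              have hp1R : (1:ℝ) ≤ p := by exact_mod_cast hp1.le
              nlinarith [hp1R, hsqrt1]
        · -- α ≠ 0
          have hstep : ∀ t ∈ Finset.univ.erase (0 : ZMod p),
              ‖ψ t * I t‖ ≤ (Real.sqrt p + 1) + (if t ^ 2 = 1 then (p : ℝ) else 0) := by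
            intro t ht
            have ht0 : t ≠ 0 := (Finset.mem_erase.mp ht).1
            rw [norm_mul, hψnorm t ht0, one_mul]
            by_cases hsq : t ^ 2 = 1
            · rw [if_pos hsq]
              have : ‖I t‖ ≤ (p - 1 : ℝ) := by
                rw [hIdef]
                refine (norm_sum_le _ _).trans ?_
                have : ∀ y ∈ Finset.univ.erase (0 : ZMod p),
                    ‖ZMod.stdAddChar (α * (t ^ 2 - 1) * y ^ 2 + γ * (t - 1) * y)‖ = 1 :=
                  fun y _ => std_norm _
                rw [Finset.sum_congr rfl this, Finset.sum_const, hcard, nsmul_eq_mul,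
                  Nat.cast_sub hp1.le]
                push_cast
                simp
              linarith [hsqrt1]
            · rw [if_neg hsq, add_zero]
              refine hIAn t ?_
              exact mul_ne_zero hα0 (sub_ne_zero.mpr hsq)
          have hsum : ‖R‖ ≤ ∑ t ∈ Finset.univ.erase (0 : ZMod p),
              ((Real.sqrt p + 1) + (if t ^ 2 = 1 then (p : ℝ) else 0)) := by
            rw [hRdef]
            exact (norm_sum_le _ _).trans (Finset.sum_le_sum hstep)
          have hitesum : ∑ t ∈ Finset.univ.erase (0 : ZMod p),
              (if t ^ 2 = 1 then (p : ℝ) else 0) ≤ 2 * p := by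
            rw [← Finset.sum_filter]
            have hsub : (Finset.univ.erase (0 : ZMod p)).filter (fun t => t ^ 2 = 1) ⊆
                {(1 : ZMod p), -1} := by
              intro t ht
              rw [Finset.mem_filter] at ht
              have := ht.2
              have : (t - 1) * (t + 1) = 0 := by ring_nf; linear_combination this
              rcases mul_eq_zero.mp this with h | h
              · simp [sub_eq_zero.mp h]
              · simp [show t = -1 by linear_combination h]
            calc ∑ _t ∈ (Finset.univ.erase (0 : ZMod p)).filter (fun t => t ^ 2 = 1), (p:ℝ)
                = ((Finset.univ.erase (0 : ZMod p)).filter (fun t => t ^ 2 = 1)).card * p := by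
                  rw [Finset.sum_const]; ring_nf
              _ ≤ 2 * p := by
                  have hc : ((Finset.univ.erase (0 : ZMod p)).filter
                      (fun t => t ^ 2 = 1)).card ≤ 2 := by
                    refine (Finset.card_le_card hsub).trans ?_
                    exact (Finset.card_insert_le _ _).trans (by simp)
                  have : (((Finset.univ.erase (0 : ZMod p)).filter
                      (fun t => t ^ 2 = 1)).card : ℝ) ≤ 2 := by exact_mod_cast hc
                  nlinarith [hp0]
          have hp3 : (3 : ℝ) ≤ p := by
            have : 3 ≤ p := by
              rcases hp.eq_one_or_self_of_dvd 1 ⟨p, (one_mul p).symm⟩ with h | h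
              · omega
              · have := hp.two_le
                omega
            exact_mod_cast this
          have hmul : Real.sqrt p * Real.sqrt p = p := Real.mul_self_sqrt hp0.le
          calc ‖R‖ ≤ ∑ t ∈ Finset.univ.erase (0 : ZMod p),
                ((Real.sqrt p + 1) + (if t ^ 2 = 1 then (p : ℝ) else 0)) := hsum
            _ = (p - 1) * (Real.sqrt p + 1) + ∑ t ∈ Finset.univ.erase (0 : ZMod p),
                (if t ^ 2 = 1 then (p : ℝ) else 0) := by
                rw [Finset.sum_add_distrib, Finset.sum_const, hcard, nsmul_eq_mul,
                  Nat.cast_sub hp1.le]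
                push_cast
                ring
            _ ≤ (p - 1) * (Real.sqrt p + 1) + 2 * p := by linarith [hitesum]
            _ ≤ 4 * p * Real.sqrt p := by nlinarith [hsqrt1, hp3, hmul]
      -- conclude
      have hTbound : ‖T‖ ≤ 2 * Real.sqrt ((p : ℝ) * Real.sqrt p) := by
        have h1 : ‖T‖ ^ 2 ≤ 4 * p * Real.sqrt p := by rw [hT2]; exact hRbound
        have h2 : (2 * Real.sqrt ((p : ℝ) * Real.sqrt p)) ^ 2 = 4 * p * Real.sqrt p := by
          rw [mul_pow, Real.sq_sqrt (by positivity)]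
          ring
        nlinarith [norm_nonneg T, Real.sqrt_nonneg ((p : ℝ) * Real.sqrt p)]
      have h34 : Real.sqrt ((p : ℝ) * Real.sqrt p) = (p : ℝ) ^ ((3:ℝ)/4) := by
        rw [Real.sqrt_eq_rpow, Real.sqrt_eq_rpow]
        rw [show (p : ℝ) * (p : ℝ) ^ ((1:ℝ)/2) = (p : ℝ) ^ ((3:ℝ)/2) by
          rw [show (3:ℝ)/2 = 1 + 1/2 by norm_num, Real.rpow_add hp0, Real.rpow_one]]
        rw [← Real.rpow_mul hp0.le]
        norm_num
      have hfin : (1 + 2 * (p : ℝ) ^ ((3:ℝ)/4)) / p ≤ 3 * (p : ℝ) ^ (-(1/4 : ℝ)) := by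
        rw [div_le_iff₀ hp0]
        have hmulp : (3 : ℝ) * (p : ℝ) ^ (-(1/4 : ℝ)) * p = 3 * (p : ℝ) ^ ((3:ℝ)/4) := by
          rw [mul_assoc, show ((p:ℝ) ^ (-(1/4:ℝ)) * p) = (p:ℝ) ^ (-(1/4:ℝ)) * (p:ℝ) ^ (1:ℝ) by
            rw [Real.rpow_one], ← Real.rpow_add hp0]
          norm_num
        rw [hmulp]
        have hone : (1 : ℝ) ≤ (p : ℝ) ^ ((3:ℝ)/4) := by
          rw [show (1:ℝ) = (1:ℝ) ^ ((3:ℝ)/4) from (Real.one_rpow _).symm]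
          exact Real.rpow_le_rpow (by norm_num) (by exact_mod_cast hp1.le) (by norm_num)
        linarith
      calc ‖1 + T‖ / p ≤ (1 + 2 * (p : ℝ) ^ ((3:ℝ)/4)) / p := by
            have : ‖1 + T‖ ≤ 1 + 2 * (p : ℝ) ^ ((3:ℝ)/4) := by
              refine (norm_add_le _ _).trans ?_
              rw [norm_one, ← h34]
              linarith [hTbound]
            gcongr
        _ ≤ 3 * (p : ℝ) ^ (-(1/4 : ℝ)) := hfin
  · -- equality part
    rintro ⟨h1, h2, h3⟩
    have hγ0 : γ = 0 := by rw [hγdef, mul_assoc, h2, mul_zero]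
    have hterm1 : ∀ x : ZMod p,
        ep p (α * x ^ 2 + γ * x) * (if x = 0 then 1 else χ x) ^ ξ₃ = 1 := by
      intro x
      have harg : α * x ^ 2 + γ * x = 0 := by rw [h1, hγ0]; ring
      rw [harg, ep_eq]
      simp only [AddChar.map_zero_eq_one, one_mul]
      by_cases hx : x = 0
      · simp [hx]
      · rw [if_neg hx]
        exact h3 x hx
    rw [Finset.sum_congr rfl (fun x _ => hterm1 x), Finset.sum_const, Finset.card_univ,
      ZMod.card]
    rw [nsmul_eq_mul, mul_one]
    field_simp
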